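/- Let G(E) be a graph inverse semigroup with a Hausdorff locally compact non-discrete shift-continuous topology. Then for any two compact neighborhoods U, V of 0, the set U \ V is finite. -/

import Mathlib

/-- A directed graph: vertices, edges, source and range maps. -/
structure DGraph where
  V : Type
  E : Type
  s : E → V
  r : E → V

namespace DGraph

variable {Q : DGraph}

/-- `pOk Q a l` : the list of edges `l` forms a valid path starting at vertex `a`. -/
def pOk (Q : DGraph) : Q.V → List Q.E → Prop
  | _, [] => True
  | a, e :: l => Q.s e = a ∧ pOk Q (Q.r e) l

/-- The end vertex of an edge-list starting at `a`. -/
def pRng (Q : DGraph) (a : Q.V) (l : List Q.E) : Q.V :=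
  l.foldl (fun _ e => Q.r e) a

theorem pRng_append (a : Q.V) (l₁ l₂ : List Q.E) :
    pRng Q a (l₁ ++ l₂) = pRng Q (pRng Q a l₁) l₂ :=
  List.foldl_append

theorem pOk_append {a : Q.V} {l₁ l₂ : List Q.E} (h₁ : pOk Q a l₁)
    (h₂ : pOk Q (pRng Q a l₁) l₂) : pOk Q a (l₁ ++ l₂) := by
  induction l₁ generalizing a with
  | nil => simpa [pRng] using h₂
  | cons e l ih =>
      obtain ⟨he, hl⟩ := h₁
      exact ⟨he, ih hl h₂⟩

theorem pOk_drop {a : Q.V} {l₁ l₂ : List Q.E} (h : pOk Q a (l₁ ++ l₂)) :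
    pOk Q (pRng Q a l₁) l₂ := by
  induction l₁ generalizing a with
  | nil => simpa [pRng] using h
  | cons e l ih => exact ih h.2

/-- A (finite, directed) path in the graph `Q`: a start vertex together with a
compatible list of edges.  Paths of length `0` are vertices. -/
structure GPath (Q : DGraph) where
  start : Q.V
  edges : List Q.E
  ok : pOk Q start edges

/-- The source `s(p)` of a path. -/
def GPath.src (p : GPath Q) : Q.V := p.start

/-- The range `r(p)` of a path. -/
def GPath.rng (p : GPath Q) : Q.V := pRng Q p.start p.edges

/-- The length `|p|` of a path. -/
def GPath.length (p : GPath Q) : ℕ := p.edges.length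

/-- The trivial (length zero) path at a vertex `a`. -/
def GPath.triv (Q : DGraph) (a : Q.V) : GPath Q := ⟨a, [], trivial⟩

/-- Concatenation of composable paths. -/
def GPath.comp (p q : GPath Q) (h : p.rng = q.start) : GPath Q :=
  ⟨p.start, p.edges ++ q.edges, pOk_append p.ok (by
    have hq := q.ok
    rw [← h] at hq
    exact hq)⟩

theorem GPath.comp_rng (p q : GPath Q) (h : p.rng = q.start) :
    (p.comp q h).rng = q.rng := by
  show pRng Q p.start (p.edges ++ q.edges) = q.rng
  rw [pRng_append, show pRng Q p.start p.edges = q.start from h]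
  rfl

theorem exists_sub {p q : GPath Q} (h1 : q.start = p.start)
    (h2 : p.edges <+: q.edges) :
    ∃ w : GPath Q, w.start = p.rng ∧ w.rng = q.rng ∧ p.edges ++ w.edges = q.edges := by
  obtain ⟨t, ht⟩ := h2
  have hok : pOk Q p.start (p.edges ++ t) := by rw [ht, ← h1]; exact q.ok
  refine ⟨⟨p.rng, t, pOk_drop hok⟩, rfl, ?_, ht⟩
  show pRng Q (pRng Q p.start p.edges) t = pRng Q q.start q.edges
  rw [← pRng_append, ht, ← h1]

/-- If the path `q` decomposes as `p·w`, this is the path `w`. -/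
noncomputable def subPath (p q : GPath Q) (h1 : q.start = p.start)
    (h2 : p.edges <+: q.edges) : GPath Q :=
  (exists_sub h1 h2).choose

theorem subPath_spec (p q : GPath Q) (h1 : q.start = p.start)
    (h2 : p.edges <+: q.edges) :
    (subPath p q h1 h2).start = p.rng ∧ (subPath p q h1 h2).rng = q.rng ∧
      p.edges ++ (subPath p q h1 h2).edges = q.edges :=
  (exists_sub h1 h2).choose_spec

/-- The graph inverse semigroup `G(E)` over the graph `Q`: the element `0`
together with the elements `u v⁻¹` where `u, v` are paths with `r(u) = r(v)`. -/
inductive GIS (Q : DGraph) : Type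
  | zero : GIS Q
  | elm (u v : GPath Q) (h : u.rng = v.rng) : GIS Q

instance : Zero (GIS Q) := ⟨GIS.zero⟩

-- Multiplication in the graph inverse semigroup:
-- `u₁v₁⁻¹ · u₂v₂⁻¹ = u₁wv₂⁻¹` if `u₂ = v₁w`, `u₁(v₂w)⁻¹` if `v₁ = u₂w`, `0` otherwise.
open Classical in
noncomputable def GIS.mul : GIS Q → GIS Q → GIS Q
  | .zero, _ => .zero
  | _, .zero => .zero
  | .elm u₁ v₁ h₁, .elm u₂ v₂ h₂ =>
    if hA : u₂.start = v₁.start ∧ v₁.edges <+: u₂.edges then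
      GIS.elm (u₁.comp (subPath v₁ u₂ hA.1 hA.2)
          (by rw [(subPath_spec v₁ u₂ hA.1 hA.2).1, h₁]))
        v₂
        (by rw [GPath.comp_rng, (subPath_spec v₁ u₂ hA.1 hA.2).2.1, h₂])
    else if hB : v₁.start = u₂.start ∧ u₂.edges <+: v₁.edges then
      GIS.elm u₁
        (v₂.comp (subPath u₂ v₁ hB.1 hB.2)
          (by rw [(subPath_spec u₂ v₁ hB.1 hB.2).1, h₂]))
        (by rw [GPath.comp_rng, (subPath_spec u₂ v₁ hB.1 hB.2).2.1, h₁])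
    else .zero

noncomputable instance : Mul (GIS Q) := ⟨GIS.mul⟩

/-- The inversion map of the graph inverse semigroup: `(uv⁻¹)⁻¹ = vu⁻¹`, `0⁻¹ = 0`. -/
def GIS.inv : GIS Q → GIS Q
  | .zero => .zero
  | .elm u v h => .elm v u h.symm

/-- The canonical identification of a path `u` with the element `u · r(u)⁻¹` of `G(E)`. -/
def toGIS (p : GPath Q) : GIS Q := GIS.elm p (GPath.triv Q p.rng) rfl

-- ===== auxiliary development =====
section Aux
variable {Q : DGraph}

theorem gpath_ext {p q : GPath Q} (h1 : p.start = q.start) (h2 : p.edges = q.edges) :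
    p = q := by
  cases p; cases q
  cases h1; cases h2
  rfl

theorem elm_eq_elm {u v u' v' : GPath Q} {h : u.rng = v.rng} {h' : u'.rng = v'.rng}
    (hu : u = u') (hv : v = v') : GIS.elm u v h = GIS.elm u' v' h' := by
  cases hu; cases hv; rfl

theorem mul_def (a b : GIS Q) : a * b = GIS.mul a b := rfl

theorem zero_mul' (x : GIS Q) : (0 : GIS Q) * x = 0 := by
  show GIS.mul .zero x = .zero
  cases x <;> rfl

theorem mul_zero' (x : GIS Q) : x * 0 = 0 := by
  show GIS.mul x .zero = .zero
  cases x <;> rfl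

theorem mul_elm_case_A {u₁ v₁ u₂ v₂ : GPath Q} {h₁ : u₁.rng = v₁.rng} {h₂ : u₂.rng = v₂.rng}
    (hs' : u₂.start = v₁.start) (hp : v₁.edges <+: u₂.edges) :
    ∃ (w X : GPath Q) (hX : X.rng = v₂.rng),
      GIS.elm u₁ v₁ h₁ * GIS.elm u₂ v₂ h₂ = GIS.elm X v₂ hX ∧
      X.start = u₁.start ∧ X.edges = u₁.edges ++ w.edges ∧
      v₁.edges ++ w.edges = u₂.edges := by
  rw [mul_def]
  simp only [GIS.mul]
  rw [dif_pos ⟨hs', hp⟩]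
  refine ⟨subPath v₁ u₂ hs' hp,
    u₁.comp (subPath v₁ u₂ hs' hp) (by rw [(subPath_spec v₁ u₂ hs' hp).1, h₁]),
    by rw [GPath.comp_rng, (subPath_spec v₁ u₂ hs' hp).2.1, h₂],
    rfl, rfl, rfl, (subPath_spec v₁ u₂ hs' hp).2.2⟩

theorem mul_elm_case_B {u₁ v₁ u₂ v₂ : GPath Q} {h₁ : u₁.rng = v₁.rng} {h₂ : u₂.rng = v₂.rng}
    (hnA : ¬(u₂.start = v₁.start ∧ v₁.edges <+: u₂.edges))
    (hs' : v₁.start = u₂.start) (hp : u₂.edges <+: v₁.edges) :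
    ∃ (w Y : GPath Q) (hY : u₁.rng = Y.rng),
      GIS.elm u₁ v₁ h₁ * GIS.elm u₂ v₂ h₂ = GIS.elm u₁ Y hY ∧
      Y.start = v₂.start ∧ Y.edges = v₂.edges ++ w.edges ∧
      u₂.edges ++ w.edges = v₁.edges := by
  rw [mul_def]
  simp only [GIS.mul]
  rw [dif_neg hnA, dif_pos ⟨hs', hp⟩]
  refine ⟨subPath u₂ v₁ hs' hp,
    v₂.comp (subPath u₂ v₁ hs' hp) (by rw [(subPath_spec u₂ v₁ hs' hp).1, h₂]),
    by rw [GPath.comp_rng, (subPath_spec u₂ v₁ hs' hp).2.1, h₁],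
    rfl, rfl, rfl, (subPath_spec u₂ v₁ hs' hp).2.2⟩

theorem mul_elm_zero {u₁ v₁ u₂ v₂ : GPath Q} {h₁ : u₁.rng = v₁.rng} {h₂ : u₂.rng = v₂.rng}
    (hnA : ¬(u₂.start = v₁.start ∧ v₁.edges <+: u₂.edges))
    (hnB : ¬(v₁.start = u₂.start ∧ u₂.edges <+: v₁.edges)) :
    GIS.elm u₁ v₁ h₁ * GIS.elm u₂ v₂ h₂ = 0 := by
  rw [mul_def]
  simp only [GIS.mul]
  rw [dif_neg hnA, dif_neg hnB]
  rfl

end Aux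

section Aux2
variable {Q : DGraph}

theorem triv_start (c : Q.V) : (GPath.triv Q c).start = c := rfl
theorem triv_edges (c : Q.V) : (GPath.triv Q c).edges = [] := rfl
theorem triv_rng (c : Q.V) : (GPath.triv Q c).rng = c := rfl

/-- `u m⁻¹ · m v⁻¹ = u v⁻¹`. -/
theorem elm_mul_elm_mid {a m b : GPath Q} (h₁ : a.rng = m.rng) (h₂ : m.rng = b.rng) :
    GIS.elm a m h₁ * GIS.elm m b h₂ = GIS.elm a b (h₁.trans h₂) := by
  obtain ⟨w, X, hX, he, hXs, hXe, hw⟩ :=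
    mul_elm_case_A (h₁ := h₁) (h₂ := h₂) rfl (List.prefix_refl _)
  rw [he]
  have hwnil : w.edges = [] := by
    have := List.append_cancel_left (hw.trans (List.append_nil m.edges).symm)
    exact this
  exact elm_eq_elm (gpath_ext hXs (by rw [hXe, hwnil, List.append_nil])) rfl

/-- Left multiplication by the trivial idempotent at `c` fixes elements whose
first path starts at `c`. -/
theorem ec_mul {c : Q.V} {u v : GPath Q} {h : u.rng = v.rng} (hu : u.start = c) :
    GIS.elm (GPath.triv Q c) (GPath.triv Q c) rfl * GIS.elm u v h = GIS.elm u v h := by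
  obtain ⟨w, X, hX, he, hXs, hXe, hw⟩ :=
    mul_elm_case_A (u₁ := GPath.triv Q c) (v₁ := GPath.triv Q c) (u₂ := u) (v₂ := v)
      (h₁ := rfl) (h₂ := h) (show u.start = c from hu) (show [] <+: u.edges from List.nil_prefix)
  rw [he]
  refine elm_eq_elm (gpath_ext ?_ ?_) rfl
  · rw [hXs, triv_start, hu]
  · rw [hXe, triv_edges, List.nil_append]
    simpa [triv_edges] using hw

/-- Right multiplication by the trivial idempotent at `c` fixes elements whose
second path starts at `c`. -/
theorem mul_ec {c : Q.V} {u v : GPath Q} {h : u.rng = v.rng} (hv : v.start = c) :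
    GIS.elm u v h * GIS.elm (GPath.triv Q c) (GPath.triv Q c) rfl = GIS.elm u v h := by
  by_cases hve : v.edges = []
  · obtain ⟨w, X, hX, he, hXs, hXe, hw⟩ :=
      mul_elm_case_A (u₁ := u) (v₁ := v) (u₂ := GPath.triv Q c) (v₂ := GPath.triv Q c)
        (h₁ := h) (h₂ := rfl) (show c = v.start from hv.symm)
        (show v.edges <+: [] from by rw [hve])
    rw [he]
    have hwnil : w.edges = [] := by
      have : v.edges ++ w.edges = [] := by simpa [triv_edges] using hw
      simpa [hve] using this
    refine elm_eq_elm (gpath_ext hXs (by rw [hXe, hwnil, List.append_nil])) (gpath_ext ?_ ?_)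
    · rw [triv_start, hv]
    · rw [triv_edges, hve]
  · obtain ⟨w, Y, hY, he, hYs, hYe, hw⟩ :=
      mul_elm_case_B (u₁ := u) (v₁ := v) (u₂ := GPath.triv Q c) (v₂ := GPath.triv Q c)
        (h₁ := h) (h₂ := rfl)
        (fun hh => hve (List.prefix_nil.mp hh.2))
        (show v.start = c from hv) (show [] <+: v.edges from List.nil_prefix)
    rw [he]
    refine elm_eq_elm rfl (gpath_ext ?_ ?_)
    · rw [hYs, triv_start, hv]
    · rw [hYe, triv_edges, List.nil_append]
      simpa [triv_edges] using hw

/-- `(x·(τ*σ*⁻¹))·(σ*τ*⁻¹) = x` when `τ*` is a prefix of the second path of `x`. -/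
theorem theta_fix_right {σ τ τ' σ' : GPath Q} {h : σ.rng = τ.rng} {h₂ : τ'.rng = σ'.rng}
    {h₃ : σ'.rng = τ'.rng} (hts : τ.start = τ'.start) (hpre : τ'.edges <+: τ.edges) :
    (GIS.elm σ τ h * GIS.elm τ' σ' h₂) * GIS.elm σ' τ' h₃ = GIS.elm σ τ h := by
  by_cases heq : τ.edges = τ'.edges
  · obtain ⟨w, X, hX, he, hXs, hXe, hw⟩ :=
      mul_elm_case_A (h₁ := h) (h₂ := h₂) hts.symm (by rw [heq])
    rw [he]
    have hwnil : w.edges = [] := by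
      have : τ.edges ++ w.edges = τ.edges ++ [] := by rw [hw, List.append_nil, heq]
      exact List.append_cancel_left this
    have hXσ : X = σ := gpath_ext hXs (by rw [hXe, hwnil, List.append_nil])
    cases hXσ
    rw [elm_mul_elm_mid]
    exact elm_eq_elm rfl (gpath_ext hts.symm heq.symm)
  · obtain ⟨w, Y, hY, he, hYs, hYe, hw⟩ :=
      mul_elm_case_B (h₁ := h) (h₂ := h₂)
        (fun hh => heq (hh.2.eq_of_length (le_antisymm hh.2.length_le hpre.length_le)))
        hts hpre
    rw [he]
    have hwne : w.edges ≠ [] := by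
      intro hnil
      exact heq (by rw [← hw, hnil, List.append_nil])
    obtain ⟨w₂, Y₂, hY₂, he₂, hY₂s, hY₂e, hw₂⟩ :=
      mul_elm_case_B (h₁ := hY) (h₂ := h₃)
        (fun hh => hwne (by
          have h1 : σ'.edges ++ w.edges <+: σ'.edges ++ [] := by
            rw [List.append_nil]; rw [hYe] at hh; exact hh.2
          have h2 : σ'.edges ++ w.edges = σ'.edges ++ [] :=
            h1.eq_of_length (by simpa using (List.IsPrefix.length_le h1))
          exact List.append_cancel_left h2))
        (by rw [hYs]) (by rw [hYe]; exact List.prefix_append _ _)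
    rw [he₂]
    have hww : w₂.edges = w.edges := by
      rw [hYe] at hw₂
      exact List.append_cancel_left hw₂
    refine elm_eq_elm rfl (gpath_ext ?_ ?_)
    · rw [hY₂s, ← hts]
    · rw [hY₂e, hww, hw]

/-- `(σ*τ*⁻¹)·((τ*σ*⁻¹)·x) = x` when `σ*` is a prefix of the first path of `x`. -/
theorem theta_fix_left {σ τ σ' τ' : GPath Q} {h : σ.rng = τ.rng} {h₂ : τ'.rng = σ'.rng}
    {h₁ : σ'.rng = τ'.rng} (hss : σ.start = σ'.start) (hpre : σ'.edges <+: σ.edges) :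
    GIS.elm σ' τ' h₁ * (GIS.elm τ' σ' h₂ * GIS.elm σ τ h) = GIS.elm σ τ h := by
  obtain ⟨w, X, hX, he, hXs, hXe, hw⟩ :=
    mul_elm_case_A (h₁ := h₂) (h₂ := h) hss hpre
  rw [he]
  obtain ⟨w₂, X₂, hX₂, he₂, hX₂s, hX₂e, hw₂⟩ :=
    mul_elm_case_A (h₁ := h₁) (h₂ := hX) (by rw [hXs]) (by rw [hXe]; exact List.prefix_append _ _)
  rw [he₂]
  have hww : w₂.edges = w.edges := by
    rw [hXe] at hw₂
    exact List.append_cancel_left hw₂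
  refine elm_eq_elm (gpath_ext ?_ ?_) rfl
  · rw [hX₂s, hss]
  · rw [hX₂e, hww, hw]

end Aux2

section Psi
variable {Q : DGraph}

/-- The set of "reductions" of the element `μν⁻¹`. -/
def Rset (μ ν : GPath Q) : Set (GIS Q) :=
  {x | ∃ (p q : GPath Q) (h : p.rng = q.rng) (w : List Q.E),
    x = GIS.elm p q h ∧ p.start = μ.start ∧ q.start = ν.start ∧
    μ.edges = p.edges ++ w ∧ ν.edges = q.edges ++ w}

theorem Rset_finite (μ ν : GPath Q) : (Rset μ ν).Finite := by
  have hsub : Rset μ ν ⊆ ⋃ k ∈ Set.Iic μ.edges.length,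
      {x | ∃ (p q : GPath Q) (h : p.rng = q.rng) (w : List Q.E),
        x = GIS.elm p q h ∧ p.start = μ.start ∧ q.start = ν.start ∧
        μ.edges = p.edges ++ w ∧ ν.edges = q.edges ++ w ∧ w.length = k} := by
    rintro x ⟨p, q, h, w, rfl, h1, h2, h3, h4⟩
    have hk : w.length ∈ Set.Iic μ.edges.length := by
      simp only [Set.mem_Iic, h3, List.length_append]
      omega
    exact Set.mem_biUnion hk ⟨p, q, h, w, rfl, h1, h2, h3, h4, rfl⟩
  refine Set.Finite.subset (Set.Finite.biUnion (Set.finite_Iic _) fun k _ => ?_) hsub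
  apply Set.Subsingleton.finite
  rintro x ⟨p, q, h, w, rfl, h1, h2, h3, h4, h5⟩ y ⟨p', q', h', w', rfl, h1', h2', h3', h4', h5'⟩
  obtain ⟨hpp, hww⟩ := List.append_inj' (h3.symm.trans h3') (h5.trans h5'.symm)
  obtain ⟨hqq, -⟩ := List.append_inj' (h4.symm.trans h4') (h5.trans h5'.symm)
  exact elm_eq_elm (gpath_ext (h1.trans h1'.symm) hpp) (gpath_ext (h2.trans h2'.symm) hqq)

theorem psi_analysis (μ ν : GPath Q) (hz : μ.rng = ν.rng) (x : GIS Q) :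
    (GIS.elm (GPath.triv Q μ.rng) μ rfl * x) * GIS.elm ν (GPath.triv Q μ.rng) hz.symm = 0 ∨
    ∃ (σ τ : GPath Q) (h : σ.rng = τ.rng),
      (GIS.elm (GPath.triv Q μ.rng) μ rfl * x) * GIS.elm ν (GPath.triv Q μ.rng) hz.symm
        = GIS.elm σ τ h ∧ σ.start = μ.rng ∧ τ.start = μ.rng ∧
      ((GIS.elm (GPath.triv Q μ.rng) μ rfl * x) * GIS.elm ν (GPath.triv Q μ.rng) hz.symm
          = GIS.elm (GPath.triv Q μ.rng) (GPath.triv Q μ.rng) rfl → x ∈ Rset μ ν) := by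
  cases x with
  | zero =>
      left
      rw [show (GIS.zero : GIS Q) = 0 from rfl, mul_zero', zero_mul']
  | elm p q hpq =>
      by_cases hA₁ : p.start = μ.start ∧ μ.edges <+: p.edges
      · obtain ⟨w₁, X₁, hX₁, he₁, hX₁s, hX₁e, hw₁⟩ :=
          mul_elm_case_A (u₁ := GPath.triv Q μ.rng) (v₁ := μ) (u₂ := p) (v₂ := q)
            (h₁ := rfl) (h₂ := hpq) hA₁.1 hA₁.2
        rw [he₁]
        by_cases hA₂ : ν.start = q.start ∧ q.edges <+: ν.edges
        · obtain ⟨w₂, X₂, hX₂, he₂, hX₂s, hX₂e, hw₂⟩ :=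
            mul_elm_case_A (u₁ := X₁) (v₁ := q) (u₂ := ν) (v₂ := GPath.triv Q μ.rng)
              (h₁ := hX₁) (h₂ := hz.symm) hA₂.1 hA₂.2
          rw [he₂]
          right
          refine ⟨X₂, GPath.triv Q μ.rng, hX₂, rfl, ?_, rfl, ?_⟩
          · rw [hX₂s, hX₁s]; rfl
          · intro hec
            injection hec with hu hv
            have hX₂nil : X₂.edges = [] := by rw [hu]; rfl
            have hw₂nil : w₂.edges = [] := by
              have := hX₂nil
              rw [hX₂e] at this
              exact (List.append_eq_nil_iff.mp this).2
            have hw₁nil : w₁.edges = [] := by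
              have h0 : X₁.edges = [] := by
                have := hX₂nil
                rw [hX₂e] at this
                exact (List.append_eq_nil_iff.mp this).1
              rw [hX₁e] at h0
              exact (List.append_eq_nil_iff.mp h0).2
            refine ⟨p, q, hpq, [], rfl, hA₁.1, hA₂.1.symm, ?_, ?_⟩
            · rw [List.append_nil]
              have := hw₁
              rw [hw₁nil, List.append_nil] at this
              exact this
            · rw [List.append_nil]
              have := hw₂
              rw [hw₂nil, List.append_nil] at this
              exact this.symm
        · by_cases hB₂ : q.start = ν.start ∧ ν.edges <+: q.edges
          · obtain ⟨w₂, Y₂, hY₂, he₂, hY₂s, hY₂e, hw₂⟩ :=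
              mul_elm_case_B (u₁ := X₁) (v₁ := q) (u₂ := ν) (v₂ := GPath.triv Q μ.rng)
                (h₁ := hX₁) (h₂ := hz.symm) hA₂ hB₂.1 hB₂.2
            rw [he₂]
            right
            refine ⟨X₁, Y₂, hY₂, rfl, ?_, ?_, ?_⟩
            · rw [hX₁s]; rfl
            · rw [hY₂s]; rfl
            · intro hec
              injection hec with hu hv
              have hX₁nil : X₁.edges = [] := by rw [hu]; rfl
              have hw₁nil : w₁.edges = [] := by
                rw [hX₁e] at hX₁nil
                exact (List.append_eq_nil_iff.mp hX₁nil).2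
              have hw₂nil : w₂.edges = [] := by
                have h0 : Y₂.edges = [] := by rw [hv]; rfl
                rw [hY₂e] at h0
                exact (List.append_eq_nil_iff.mp h0).2
              refine ⟨p, q, hpq, [], rfl, hA₁.1, hB₂.1, ?_, ?_⟩
              · rw [List.append_nil]
                have := hw₁
                rw [hw₁nil, List.append_nil] at this
                exact this
              · rw [List.append_nil]
                have := hw₂
                rw [hw₂nil, List.append_nil] at this
                exact this
          · left; exact mul_elm_zero hA₂ hB₂
      · by_cases hB₁ : μ.start = p.start ∧ p.edges <+: μ.edges
        · obtain ⟨w₁, Y₁, hY₁, he₁, hY₁s, hY₁e, hw₁⟩ :=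
            mul_elm_case_B (u₁ := GPath.triv Q μ.rng) (v₁ := μ) (u₂ := p) (v₂ := q)
              (h₁ := rfl) (h₂ := hpq) hA₁ hB₁.1 hB₁.2
          rw [he₁]
          by_cases hA₂ : ν.start = Y₁.start ∧ Y₁.edges <+: ν.edges
          · obtain ⟨w₂, X₂, hX₂, he₂, hX₂s, hX₂e, hw₂⟩ :=
              mul_elm_case_A (u₁ := GPath.triv Q μ.rng) (v₁ := Y₁) (u₂ := ν)
                (v₂ := GPath.triv Q μ.rng) (h₁ := hY₁) (h₂ := hz.symm) hA₂.1 hA₂.2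
            rw [he₂]
            right
            refine ⟨X₂, GPath.triv Q μ.rng, hX₂, rfl, ?_, rfl, ?_⟩
            · rw [hX₂s]; rfl
            · intro hec
              injection hec with hu hv
              have hw₂nil : w₂.edges = [] := by
                have h0 : X₂.edges = [] := by rw [hu]; rfl
                rw [hX₂e] at h0
                exact (List.append_eq_nil_iff.mp h0).2
              have hνe : ν.edges = q.edges ++ w₁.edges := by
                have := hw₂
                rw [hw₂nil, List.append_nil] at this
                rw [← this, hY₁e]
              exact ⟨p, q, hpq, w₁.edges, rfl, hB₁.1.symm,
                (hA₂.1.trans (hY₁s.trans rfl)).symm, hw₁.symm, hνe⟩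
          · by_cases hB₂ : Y₁.start = ν.start ∧ ν.edges <+: Y₁.edges
            · obtain ⟨w₂, Y₂, hY₂, he₂, hY₂s, hY₂e, hw₂⟩ :=
                mul_elm_case_B (u₁ := GPath.triv Q μ.rng) (v₁ := Y₁) (u₂ := ν)
                  (v₂ := GPath.triv Q μ.rng) (h₁ := hY₁) (h₂ := hz.symm) hA₂ hB₂.1 hB₂.2
              rw [he₂]
              right
              refine ⟨GPath.triv Q μ.rng, Y₂, hY₂, rfl, rfl, ?_, ?_⟩
              · rw [hY₂s]; rfl
              · intro hec
                injection hec with hu hv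
                have hw₂nil : w₂.edges = [] := by
                  have h0 : Y₂.edges = [] := by rw [hv]; rfl
                  rw [hY₂e] at h0
                  exact (List.append_eq_nil_iff.mp h0).2
                have hνe : ν.edges = q.edges ++ w₁.edges := by
                  have := hw₂
                  rw [hw₂nil, List.append_nil] at this
                  rw [this, hY₁e]
                exact ⟨p, q, hpq, w₁.edges, rfl, hB₁.1.symm,
                  (hY₁s.symm.trans hB₂.1), hw₁.symm, hνe⟩
            · left; exact mul_elm_zero hA₂ hB₂
        · left
          exact (congrArg (fun y => y * _) (mul_elm_zero hA₁ hB₁)).trans (zero_mul' _)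

end Psi

section Core
open Filter Topology
variable {Q : DGraph} [TopologicalSpace (GIS Q)] [T2Space (GIS Q)]

theorem elm_ne_zero (u v : GPath Q) (h : u.rng = v.rng) : GIS.elm u v h ≠ 0 :=
  fun habs => by cases habs

theorem evne {H : Filter (GIS Q)} {L b : GIS Q} (hH : H ≤ nhds L) (hb : b ≠ L) :
    ∀ᶠ x in H, x ≠ b :=
  hH (isOpen_compl_singleton.mem_nhds (Set.mem_compl_singleton_iff.mpr hb.symm))

theorem core_lemma
    (hs : ∀ a : GIS Q, Continuous (fun x => a * x) ∧ Continuous (fun x => x * a))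
    (c : Q.V) (H : Filter (GIS Q)) [H.NeBot]
    (hle : H ≤ nhds (GIS.elm (GPath.triv Q c) (GPath.triv Q c) rfl))
    (hshape : ∀ᶠ x in H, ∃ (σ τ : GPath Q) (h : σ.rng = τ.rng),
        x = GIS.elm σ τ h ∧ σ.start = c ∧ τ.start = c)
    (hne : ∀ᶠ x in H, x ≠ GIS.elm (GPath.triv Q c) (GPath.triv Q c) rfl) : False := by
  set e : GIS Q := GIS.elm (GPath.triv Q c) (GPath.triv Q c) rfl with he_def
  -- peeling lemmas
  have peelτ : ∀ (π : GPath Q), π.start = c → ∀ᶠ x in H,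
      ∀ (σ τ : GPath Q) (h : σ.rng = τ.rng), x = GIS.elm σ τ h → τ.start = c →
        (τ.edges <+: π.edges ∨ π.edges <+: τ.edges) := by
    intro π hπ
    have hT : Tendsto (fun x => x * GIS.elm π π rfl) H (nhds (e * GIS.elm π π rfl)) :=
      (((hs (GIS.elm π π rfl)).2).tendsto e).mono_left hle
    rw [ec_mul hπ] at hT
    have hne0 : ∀ᶠ x in H, x * GIS.elm π π rfl ≠ 0 := hT.eventually_ne (elm_ne_zero _ _ _)
    filter_upwards [hne0] with x hx
    intro σ τ h hx' hτs
    by_contra hcon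
    push_neg at hcon
    apply hx
    rw [hx']
    exact mul_elm_zero (fun hh => hcon.1 hh.2) (fun hh => hcon.2 hh.2)
  have peelσ : ∀ (π : GPath Q), π.start = c → ∀ᶠ x in H,
      ∀ (σ τ : GPath Q) (h : σ.rng = τ.rng), x = GIS.elm σ τ h → σ.start = c →
        (σ.edges <+: π.edges ∨ π.edges <+: σ.edges) := by
    intro π hπ
    have hT : Tendsto (fun x => GIS.elm π π rfl * x) H (nhds (GIS.elm π π rfl * e)) :=
      (((hs (GIS.elm π π rfl)).1).tendsto e).mono_left hle
    rw [mul_ec hπ] at hT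
    have hne0 : ∀ᶠ x in H, GIS.elm π π rfl * x ≠ 0 := hT.eventually_ne (elm_ne_zero _ _ _)
    filter_upwards [hne0] with x hx
    intro σ τ h hx' hσs
    by_contra hcon
    push_neg at hcon
    apply hx
    rw [hx']
    exact mul_elm_zero (fun hh => hcon.2 hh.2) (fun hh => hcon.1 hh.2)
  by_cases hA : ∀ N : ℕ, ∃ᶠ x in H, ∃ (σ τ : GPath Q) (h : σ.rng = τ.rng),
      x = GIS.elm σ τ h ∧ σ.start = c ∧ τ.start = c ∧ N ≤ τ.edges.length
  · -- second paths of unbounded length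
    obtain ⟨x', σ', τ', h', hxe, hσs, hτs, hτ1⟩ := (hA 1).exists
    clear hxe
    have hEne : GIS.elm τ' τ' rfl ≠ e := by
      intro habs
      injection habs with hu hv
      have : τ'.edges = [] := by rw [hu]; rfl
      rw [this] at hτ1
      simp at hτ1
    have hT : Tendsto (fun x => (x * GIS.elm τ' σ' h'.symm) * GIS.elm σ' τ' h') H
        (nhds (GIS.elm τ' τ' rfl)) := by
      have t1 : Tendsto (fun x => x * GIS.elm τ' σ' h'.symm) H
          (nhds (e * GIS.elm τ' σ' h'.symm)) :=
        (((hs _).2).tendsto e).mono_left hle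
      rw [ec_mul hτs] at t1
      have t2 : Tendsto (fun y => y * GIS.elm σ' τ' h') (nhds (GIS.elm τ' σ' h'.symm))
          (nhds (GIS.elm τ' σ' h'.symm * GIS.elm σ' τ' h')) := ((hs _).2).tendsto _
      rw [elm_mul_elm_mid h'.symm h', show GIS.elm τ' τ' (h'.symm.trans h') = GIS.elm τ' τ' rfl
        from elm_eq_elm rfl rfl] at t2
      exact t2.comp t1
    obtain ⟨O, P, hO, hP, heO, hEP, hOP⟩ := t2_separation hEne.symm
    have hOev : ∀ᶠ x in H, x ∈ O := hle (hO.mem_nhds heO)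
    have hPev : ∀ᶠ x in H, ((x * GIS.elm τ' σ' h'.symm) * GIS.elm σ' τ' h') ∈ P :=
      hT (hP.mem_nhds hEP)
    have hfix : ∃ᶠ x in H, (x * GIS.elm τ' σ' h'.symm) * GIS.elm σ' τ' h' = x := by
      refine ((hA τ'.edges.length).and_eventually (peelτ τ' hτs)).mono ?_
      rintro x ⟨⟨σ, τ, h, rfl, hσs', hτs', hlen⟩, hcomp⟩
      have hpre : τ'.edges <+: τ.edges := by
        rcases hcomp σ τ h rfl hτs' with hc | hc
        · rw [hc.eq_of_length (le_antisymm hc.length_le hlen)]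
        · exact hc
      exact theta_fix_right (hτs'.trans hτs.symm) hpre
    obtain ⟨x, hfixx, hxO, hxP⟩ := (hfix.and_eventually (hOev.and hPev)).exists
    exact Set.disjoint_left.mp hOP hxO (hfixx ▸ hxP)
  · push_neg at hA
    obtain ⟨N, hN⟩ := hA
    replace hN : ∀ᶠ x in H, ¬∃ (σ τ : GPath Q) (h : σ.rng = τ.rng),
        x = GIS.elm σ τ h ∧ σ.start = c ∧ τ.start = c ∧ N ≤ τ.edges.length :=
      hN.mono fun x hx ⟨σ, τ, h, hxe, h1, h2, hle'⟩ => absurd (hx σ τ h hxe h1 h2) (not_lt.mpr hle')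
    by_cases hB : ∀ M : ℕ, ∃ᶠ x in H, ∃ (σ τ : GPath Q) (h : σ.rng = τ.rng),
        x = GIS.elm σ τ h ∧ σ.start = c ∧ τ.start = c ∧ M ≤ σ.edges.length
    · -- first paths of unbounded length : mirror argument
      obtain ⟨x', σ', τ', h', hxe, hσs, hτs, hσ1⟩ := (hB 1).exists
      clear hxe
      have hEne : GIS.elm σ' σ' rfl ≠ e := by
        intro habs
        injection habs with hu hv
        have : σ'.edges = [] := by rw [hu]; rfl
        rw [this] at hσ1
        simp at hσ1
      have hT : Tendsto (fun x => GIS.elm σ' τ' h' * (GIS.elm τ' σ' h'.symm * x)) H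
          (nhds (GIS.elm σ' σ' rfl)) := by
        have t1 : Tendsto (fun x => GIS.elm τ' σ' h'.symm * x) H
            (nhds (GIS.elm τ' σ' h'.symm * e)) :=
          (((hs _).1).tendsto e).mono_left hle
        rw [mul_ec hσs] at t1
        have t2 : Tendsto (fun y => GIS.elm σ' τ' h' * y) (nhds (GIS.elm τ' σ' h'.symm))
            (nhds (GIS.elm σ' τ' h' * GIS.elm τ' σ' h'.symm)) := ((hs _).1).tendsto _
        rw [elm_mul_elm_mid h' h'.symm, show GIS.elm σ' σ' (h'.trans h'.symm) = GIS.elm σ' σ' rfl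
          from elm_eq_elm rfl rfl] at t2
        exact t2.comp t1
      obtain ⟨O, P, hO, hP, heO, hEP, hOP⟩ := t2_separation hEne.symm
      have hOev : ∀ᶠ x in H, x ∈ O := hle (hO.mem_nhds heO)
      have hPev : ∀ᶠ x in H, (GIS.elm σ' τ' h' * (GIS.elm τ' σ' h'.symm * x)) ∈ P :=
        hT (hP.mem_nhds hEP)
      have hfix : ∃ᶠ x in H, GIS.elm σ' τ' h' * (GIS.elm τ' σ' h'.symm * x) = x := by
        refine ((hB σ'.edges.length).and_eventually (peelσ σ' hσs)).mono ?_
        rintro x ⟨⟨σ, τ, h, rfl, hσs', hτs', hlen⟩, hcomp⟩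
        have hpre : σ'.edges <+: σ.edges := by
          rcases hcomp σ τ h rfl hσs' with hc | hc
          · rw [hc.eq_of_length (le_antisymm hc.length_le hlen)]
          · exact hc
        exact theta_fix_left (hσs'.trans hσs.symm) hpre
      obtain ⟨x, hfixx, hxO, hxP⟩ := (hfix.and_eventually (hOev.and hPev)).exists
      exact Set.disjoint_left.mp hOP hxO (hfixx ▸ hxP)
    · push_neg at hB
      obtain ⟨M, hM⟩ := hB
      replace hM : ∀ᶠ x in H, ¬∃ (σ τ : GPath Q) (h : σ.rng = τ.rng),
          x = GIS.elm σ τ h ∧ σ.start = c ∧ τ.start = c ∧ M ≤ σ.edges.length :=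
        hM.mono fun x hx ⟨σ, τ, h, hxe, h1, h2, hle'⟩ => absurd (hx σ τ h hxe h1 h2) (not_lt.mpr hle')
      -- both lengths eventually bounded: pigeonhole
      have hbdd : ∀ᶠ x in H, ∃ (σ τ : GPath Q) (h : σ.rng = τ.rng),
          x = GIS.elm σ τ h ∧ σ.start = c ∧ τ.start = c ∧
          σ.edges.length < M ∧ τ.edges.length < N := by
        filter_upwards [hshape, hN, hM] with x hx hxN hxM
        obtain ⟨σ, τ, h, rfl, h1, h2⟩ := hx
        refine ⟨σ, τ, h, rfl, h1, h2, ?_, ?_⟩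
        · have : ¬ M ≤ σ.edges.length := fun hle' => hxM ⟨σ, τ, h, rfl, h1, h2, hle'⟩
          omega
        · have : ¬ N ≤ τ.edges.length := fun hle' => hxN ⟨σ, τ, h, rfl, h1, h2, hle'⟩
          omega
      have hex : ∃ s₀ t₀ : ℕ, ∃ᶠ x in H, ∃ (σ τ : GPath Q) (h : σ.rng = τ.rng),
          x = GIS.elm σ τ h ∧ σ.start = c ∧ τ.start = c ∧
          σ.edges.length = s₀ ∧ τ.edges.length = t₀ := by
        by_contra hcon
        push_neg at hcon
        have hall : ∀ᶠ x in H, ∀ s ∈ Finset.range M, ∀ t ∈ Finset.range N,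
            ¬∃ (σ τ : GPath Q) (h : σ.rng = τ.rng),
              x = GIS.elm σ τ h ∧ σ.start = c ∧ τ.start = c ∧
              σ.edges.length = s ∧ τ.edges.length = t := by
          rw [Filter.eventually_all_finset]
          intro s _
          rw [Filter.eventually_all_finset]
          intro t _
          exact (hcon s t).mono fun x hx ⟨σ, τ, h, hxe, h1, h2, h3, h4⟩ => hx σ τ h hxe h1 h2 h3 h4
        obtain ⟨x, hx1, hx2⟩ := (hbdd.and hall).exists
        obtain ⟨σ, τ, h, rfl, h1, h2, h3, h4⟩ := hx1
        exact hx2 σ.edges.length (Finset.mem_range.mpr h3) τ.edges.length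
          (Finset.mem_range.mpr h4) ⟨σ, τ, h, rfl, h1, h2, rfl, rfl⟩
      obtain ⟨s₀, t₀, hfreq⟩ := hex
      obtain ⟨x', hx'1, hx'2⟩ := (hfreq.and_eventually hne).exists
      obtain ⟨σ', τ', h', rfl, hσs, hτs, hσl, hτl⟩ := hx'1
      have hconst : ∃ᶠ x in H, x = GIS.elm σ' τ' h' := by
        refine (hfreq.and_eventually ((peelσ σ' hσs).and (peelτ τ' hτs))).mono ?_
        rintro x ⟨⟨σ, τ, h, rfl, h1, h2, h3, h4⟩, hpσ, hpτ⟩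
        have hσe : σ.edges = σ'.edges := by
          rcases hpσ σ τ h rfl h1 with hc | hc
          · exact hc.eq_of_length (h3.trans hσl.symm)
          · exact (hc.eq_of_length (hσl.trans h3.symm)).symm
        have hτe : τ.edges = τ'.edges := by
          rcases hpτ σ τ h rfl h2 with hc | hc
          · exact hc.eq_of_length (h4.trans hτl.symm)
          · exact (hc.eq_of_length (hτl.trans h4.symm)).symm
        exact elm_eq_elm (gpath_ext (h1.trans hσs.symm) hσe)
          (gpath_ext (h2.trans hτs.symm) hτe)
      obtain ⟨x, hxc, hxne⟩ := (hconst.and_eventually (evne hle hx'2)).exists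
      exact hxne hxc

end Core

section Isolated
open Filter Topology
variable {Q : DGraph} [TopologicalSpace (GIS Q)] [T2Space (GIS Q)]

theorem isolated_of_ne_zero
    (hs : ∀ a : GIS Q, Continuous (fun x => a * x) ∧ Continuous (fun x => x * a))
    (z : GIS Q) (hz0 : z ≠ 0) : {z} ∈ nhds z := by
  by_contra hiso
  have hcl : z ∈ closure ({z}ᶜ : Set (GIS Q)) := by
    by_contra hc
    apply hiso
    refine Filter.mem_of_superset (isClosed_closure.isOpen_compl.mem_nhds hc) ?_
    intro y hy
    simp only [Set.mem_compl_iff] at hy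
    by_contra hne
    exact hy (subset_closure hne)
  have hF : (nhdsWithin z ({z}ᶜ : Set (GIS Q))).NeBot :=
    mem_closure_iff_nhdsWithin_neBot.mp hcl
  cases z with
  | zero => exact hz0 rfl
  | elm μ ν hz =>
      set F := nhdsWithin (GIS.elm μ ν hz) ({(GIS.elm μ ν hz)}ᶜ : Set (GIS Q)) with hFdef
      have hFle : F ≤ nhds (GIS.elm μ ν hz) := nhdsWithin_le_nhds
      set ψ : GIS Q → GIS Q := fun x =>
        (GIS.elm (GPath.triv Q μ.rng) μ rfl * x) * GIS.elm ν (GPath.triv Q μ.rng) hz.symm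
        with hψdef
      have hψz : ψ (GIS.elm μ ν hz) =
          GIS.elm (GPath.triv Q μ.rng) (GPath.triv Q μ.rng) rfl := by
        show (GIS.elm (GPath.triv Q μ.rng) μ rfl * GIS.elm μ ν hz) *
          GIS.elm ν (GPath.triv Q μ.rng) hz.symm = _
        rw [elm_mul_elm_mid (a := GPath.triv Q μ.rng) (m := μ) (b := ν) rfl hz,
          elm_mul_elm_mid (a := GPath.triv Q μ.rng) (m := ν) (b := GPath.triv Q μ.rng)
            (Eq.trans rfl hz) hz.symm]
      have hT : Tendsto ψ F (nhds (GIS.elm (GPath.triv Q μ.rng) (GPath.triv Q μ.rng) rfl)) := by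
        have t1 : Tendsto (fun x => GIS.elm (GPath.triv Q μ.rng) μ rfl * x) F
            (nhds (GIS.elm (GPath.triv Q μ.rng) μ rfl * GIS.elm μ ν hz)) :=
          (((hs _).1).tendsto _).mono_left hFle
        have t2 : Tendsto (fun y => y * GIS.elm ν (GPath.triv Q μ.rng) hz.symm)
            (nhds (GIS.elm (GPath.triv Q μ.rng) μ rfl * GIS.elm μ ν hz))
            (nhds ((GIS.elm (GPath.triv Q μ.rng) μ rfl * GIS.elm μ ν hz) *
              GIS.elm ν (GPath.triv Q μ.rng) hz.symm)) := ((hs _).2).tendsto _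
        have := t2.comp t1
        rw [show ((GIS.elm (GPath.triv Q μ.rng) μ rfl * GIS.elm μ ν hz) *
            GIS.elm ν (GPath.triv Q μ.rng) hz.symm) =
            GIS.elm (GPath.triv Q μ.rng) (GPath.triv Q μ.rng) rfl from hψz] at this
        exact this
      haveI : (F.map ψ).NeBot := Filter.map_neBot
      have hle : F.map ψ ≤ nhds (GIS.elm (GPath.triv Q μ.rng) (GPath.triv Q μ.rng) rfl) := hT
      have hne0 : ∀ᶠ x in F, ψ x ≠ 0 := hT.eventually_ne (elm_ne_zero _ _ _)
      have hshape : ∀ᶠ y in F.map ψ, ∃ (σ τ : GPath Q) (h : σ.rng = τ.rng),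
          y = GIS.elm σ τ h ∧ σ.start = μ.rng ∧ τ.start = μ.rng := by
        rw [Filter.eventually_map]
        filter_upwards [hne0] with x hx
        rcases psi_analysis μ ν hz x with h0 | ⟨σ, τ, h, heq, h1, h2, _⟩
        · exact absurd h0 hx
        · exact ⟨σ, τ, h, heq, h1, h2⟩
      have hevR : ∀ᶠ x in F, x ∉ Rset μ ν := by
        have hall : ∀ᶠ x in F, ∀ b ∈ Rset μ ν, x ≠ b := by
          rw [Filter.eventually_all_finite (Rset_finite μ ν)]
          intro b _
          by_cases hbz : b = GIS.elm μ ν hz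
          · subst hbz
            have : ∀ᶠ x in F, x ∈ ({(GIS.elm μ ν hz)}ᶜ : Set (GIS Q)) :=
              eventually_mem_nhdsWithin
            exact this.mono (fun x hx => hx)
          · exact evne hFle hbz
        exact hall.mono (fun x hx hmem => hx x hmem rfl)
      have hnee : ∀ᶠ y in F.map ψ, y ≠
          GIS.elm (GPath.triv Q μ.rng) (GPath.triv Q μ.rng) rfl := by
        rw [Filter.eventually_map]
        filter_upwards [hevR] with x hx habs
        rcases psi_analysis μ ν hz x with h0 | ⟨σ, τ, h, heq, h1, h2, hinv⟩
        · exact elm_ne_zero _ _ _ (habs.symm.trans h0)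
        · exact hx (hinv habs)
      exact core_lemma hs μ.rng (F.map ψ) hle hshape hnee

end Isolated
end DGraph


open DGraph

theorem stmt8 (Q : DGraph) [TopologicalSpace (GIS Q)] [T2Space (GIS Q)]
    [LocallyCompactSpace (GIS Q)]
    (hs : ∀ a : GIS Q, Continuous (fun x => a * x) ∧ Continuous (fun x => x * a))
    (hnd : ¬ DiscreteTopology (GIS Q)) :
    ∀ U V : Set (GIS Q), IsCompact U → U ∈ nhds 0 → IsCompact V → V ∈ nhds 0 →
      (U \ V).Finite := by
  intro U V hU _ _ hVm
  have hK : IsCompact (U \ interior V) := hU.diff isOpen_interior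
  have h0 : (0 : GIS Q) ∈ interior V := mem_interior_iff_mem_nhds.mpr hVm
  have hiso : ∀ z ∈ U \ interior V, {z} ∈ nhds z := by
    intro z hz
    refine isolated_of_ne_zero hs z ?_
    intro hz0
    exact hz.2 (hz0 ▸ h0)
  obtain ⟨t, -, hcover⟩ := hK.elim_nhds_subcover (fun z => {z}) hiso
  have hfin : (U \ interior V).Finite :=
    (t.finite_toSet.biUnion (fun _ _ => Set.finite_singleton _)).subset hcover
  exact hfin.subset (fun x hx => ⟨hx.1, fun hi => hx.2 (interior_subset hi)⟩)
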